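/- (Phenomenological model, syndrome pair (0,0).) For every ρ ∈ M with Π₀ * ρ * Π₀ = ρ (a codespace-supported state), one has I₀(I₀(ρ)) = (1−q)² • Λ_I(Λ_I(ρ)) + q • Λ_{IX}(Λ_I(ρ)) + (1−q)·q • Λ_{IX}(Λ_{IX}(ρ)); i.e. the unnormalized channel p(0,0)·E^{(0,0)} conditioned on observed syndromes (0,0) equals (1−q)²Λ_I² + qΛ_{IX}Λ_I + (1−q)qΛ_{IX}². -/
import Mathlib


open Matrix Kronecker

/-- `χ(s) = (-1)^s` for `s ∈ ZMod 2`, valued in `ℂ`. -/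
noncomputable def chiC (s : ZMod 2) : ℂ := (-1 : ℂ) ^ s.val

/-- The Pauli `X` matrix. -/
noncomputable def Xm : Matrix (Fin 2) (Fin 2) ℂ := !![0, 1; 1, 0]

/-- The Pauli `Z` matrix. -/
noncomputable def Zm : Matrix (Fin 2) (Fin 2) ℂ := !![1, 0; 0, -1]

/-- The two-qubit operator `X ⊗ X` (the logical `X̄` of the `[[2,1,1]]` code). -/
noncomputable def XX : Matrix (Fin 2 × Fin 2) (Fin 2 × Fin 2) ℂ := Xm ⊗ₖ Xm

/-- The two-qubit operator `I ⊗ X` (the pure error of the `[[2,1,1]]` code). -/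
noncomputable def IX : Matrix (Fin 2 × Fin 2) (Fin 2 × Fin 2) ℂ :=
  (1 : Matrix (Fin 2) (Fin 2) ℂ) ⊗ₖ Xm

/-- The two-qubit operator `Z ⊗ Z`. -/
noncomputable def ZZ : Matrix (Fin 2 × Fin 2) (Fin 2 × Fin 2) ℂ := Zm ⊗ₖ Zm

/-- Projector onto the `(-1)^{s+1}` "syndrome-`s`" eigenspace of the
stabilizer `−ZZ` of the `[[2,1,1]]` code: `Π_s = (1/2)(1 − (-1)^s ZZ)`. -/
noncomputable def Proj (s : ZMod 2) : Matrix (Fin 2 × Fin 2) (Fin 2 × Fin 2) ℂ :=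
  (1 / 2 : ℂ) • (1 - chiC s • ZZ)

/-- Trivial-syndrome part of the phenomenological data-qubit error channel:
`Λ_I(ρ) = (1−p)² ρ + p² XXρXX`. -/
noncomputable def LamI (p : ℝ) (ρ : Matrix (Fin 2 × Fin 2) (Fin 2 × Fin 2) ℂ) :
    Matrix (Fin 2 × Fin 2) (Fin 2 × Fin 2) ℂ :=
  ((1 - p) ^ 2) • ρ + (p ^ 2) • (XX * ρ * XX)

/-- Flipped-syndrome part of the phenomenological data-qubit error channel:
`Λ_{IX}(ρ) = (1−p)p (IX ρ IX + (IX·XX) ρ (XX·IX))`. -/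
noncomputable def LamIX (p : ℝ) (ρ : Matrix (Fin 2 × Fin 2) (Fin 2 × Fin 2) ℂ) :
    Matrix (Fin 2 × Fin 2) (Fin 2 × Fin 2) ℂ :=
  ((1 - p) * p) • (IX * ρ * IX + (IX * XX) * ρ * (XX * IX))

/-- `P⁰ = (1−q)Λ_I + qΛ_{IX}`, the internal errors compatible with a correctly
read syndrome. -/
noncomputable def P0 (p q : ℝ) (ρ : Matrix (Fin 2 × Fin 2) (Fin 2 × Fin 2) ℂ) :
    Matrix (Fin 2 × Fin 2) (Fin 2 × Fin 2) ℂ :=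
  (1 - q) • LamI p ρ + q • LamIX p ρ

/-- `P¹ = qΛ_I + (1−q)Λ_{IX}`, the internal errors compatible with a flipped
syndrome bit. -/
noncomputable def P1 (p q : ℝ) (ρ : Matrix (Fin 2 × Fin 2) (Fin 2 × Fin 2) ℂ) :
    Matrix (Fin 2 × Fin 2) (Fin 2 × Fin 2) ℂ :=
  q • LamI p ρ + (1 - q) • LamIX p ρ

/-- The noisy measurement instrument of the phenomenological model:
`I_s(ρ) = P⁰(Π_s ρ Π_s) + P¹(Π_{s+1} ρ Π_{s+1})`. -/
noncomputable def Inst (p q : ℝ) (s : ZMod 2)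
    (ρ : Matrix (Fin 2 × Fin 2) (Fin 2 × Fin 2) ℂ) :
    Matrix (Fin 2 × Fin 2) (Fin 2 × Fin 2) ℂ :=
  P0 p q (Proj s * ρ * Proj s) + P1 p q (Proj (s + 1) * ρ * Proj (s + 1))


lemma XmXm : Xm * Xm = 1 := by
  rw [Xm, show (1 : Matrix (Fin 2) (Fin 2) ℂ) = !![1,0;0,1] from Matrix.one_fin_two]
  norm_num [Matrix.mul_fin_two]
lemma ZmZm : Zm * Zm = 1 := by
  rw [Zm, show (1 : Matrix (Fin 2) (Fin 2) ℂ) = !![1,0;0,1] from Matrix.one_fin_two]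
  norm_num [Matrix.mul_fin_two]
lemma ZmXm : Zm * Xm = -(Xm * Zm) := by
  rw [Xm, Zm]; norm_num [Matrix.mul_fin_two]

lemma XXXX : XX * XX = 1 := by
  rw [XX, ← Matrix.mul_kronecker_mul, XmXm, ← Matrix.one_kronecker_one]
lemma ZZZZ : ZZ * ZZ = 1 := by
  rw [ZZ, ← Matrix.mul_kronecker_mul, ZmZm, ← Matrix.one_kronecker_one]
lemma IXXX : IX * XX = XX * IX := by
  rw [IX, XX, ← Matrix.mul_kronecker_mul, ← Matrix.mul_kronecker_mul, one_mul, mul_one]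
lemma ZZXX : ZZ * XX = XX * ZZ := by
  rw [ZZ, XX, ← Matrix.mul_kronecker_mul, ← Matrix.mul_kronecker_mul, ZmXm]
  ext ⟨i,j⟩ ⟨k,l⟩
  simp [Matrix.kroneckerMap_apply]
lemma ZZIX : ZZ * IX = -(IX * ZZ) := by
  rw [ZZ, IX, ← Matrix.mul_kronecker_mul, ← Matrix.mul_kronecker_mul, one_mul, mul_one, ZmXm]
  ext ⟨i,j⟩ ⟨k,l⟩
  simp [Matrix.kroneckerMap_apply]

lemma chi0 : chiC 0 = 1 := by simp [chiC]
lemma chi1 : chiC 1 = -1 := by rw [chiC, show (1 : ZMod 2).val = 1 from rfl, pow_one]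
lemma Proj0_eq : Proj 0 = (1 / 2 : ℂ) • (1 - ZZ) := by rw [Proj, chi0, one_smul]
lemma Proj1_eq : Proj 1 = (1 / 2 : ℂ) • (1 + ZZ) := by
  rw [Proj, chi1, neg_smul, one_smul, sub_neg_eq_add]

lemma P00 : Proj 0 * Proj 0 = Proj 0 := by
  rw [Proj0_eq]
  simp only [Matrix.smul_mul, Matrix.mul_smul, sub_mul, mul_sub, one_mul, mul_one, ZZZZ]
  match_scalars <;> ring
lemma P11 : Proj 1 * Proj 1 = Proj 1 := by
  rw [Proj1_eq]
  simp only [Matrix.smul_mul, Matrix.mul_smul, add_mul, mul_add, one_mul, mul_one, ZZZZ]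
  match_scalars <;> ring
lemma P10 : Proj 1 * Proj 0 = 0 := by
  rw [Proj0_eq, Proj1_eq]
  simp only [Matrix.smul_mul, Matrix.mul_smul, add_mul, mul_add, sub_mul, mul_sub,
    one_mul, mul_one, ZZZZ]
  match_scalars <;> ring
lemma P01 : Proj 0 * Proj 1 = 0 := by
  rw [Proj0_eq, Proj1_eq]
  simp only [Matrix.smul_mul, Matrix.mul_smul, add_mul, mul_add, sub_mul, mul_sub,
    one_mul, mul_one, ZZZZ]
  match_scalars <;> ring
lemma P0XX : Proj 0 * XX = XX * Proj 0 := by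
  rw [Proj0_eq]
  simp only [Matrix.smul_mul, Matrix.mul_smul, sub_mul, mul_sub, one_mul, mul_one, ZZXX]
lemma P1XX : Proj 1 * XX = XX * Proj 1 := by
  rw [Proj1_eq]
  simp only [Matrix.smul_mul, Matrix.mul_smul, add_mul, mul_add, one_mul, mul_one, ZZXX]
lemma P0IX : Proj 0 * IX = IX * Proj 1 := by
  rw [Proj0_eq, Proj1_eq]
  simp only [Matrix.smul_mul, Matrix.mul_smul, sub_mul, mul_sub, add_mul, mul_add,
    one_mul, mul_one, ZZIX]
  match_scalars <;> ring
lemma P1IX : Proj 1 * IX = IX * Proj 0 := by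
  rw [Proj0_eq, Proj1_eq]
  simp only [Matrix.smul_mul, Matrix.mul_smul, sub_mul, mul_sub, add_mul, mul_add,
    one_mul, mul_one, ZZIX]
  match_scalars <;> ring

lemma conjP0 {A σ : Matrix (Fin 2 × Fin 2) (Fin 2 × Fin 2) ℂ}
    (hA : Proj 0 * A = A * Proj 0) (h1 : Proj 0 * σ = σ) (h2 : σ * Proj 0 = σ) :
    Proj 0 * (A * σ * A) = A * σ * A ∧ (A * σ * A) * Proj 0 = A * σ * A := by
  constructor
  · rw [← mul_assoc, ← mul_assoc, hA, mul_assoc A, h1]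
  · rw [mul_assoc, ← hA, ← mul_assoc, mul_assoc A σ, h2]

lemma conjP1 {B σ : Matrix (Fin 2 × Fin 2) (Fin 2 × Fin 2) ℂ}
    (hB : Proj 0 * B = B * Proj 1) (hB' : Proj 1 * B = B * Proj 0)
    (h1 : Proj 0 * σ = σ) (h2 : σ * Proj 0 = σ) :
    (Proj 1 * (B * σ * B) = B * σ * B) ∧ ((B * σ * B) * Proj 1 = B * σ * B) ∧
      (Proj 0 * (B * σ * B) = 0) ∧ ((B * σ * B) * Proj 0 = 0) := by
  have h1z : Proj 1 * σ = 0 := by rw [← h1, ← mul_assoc, P10, zero_mul]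
  have h2z : σ * Proj 1 = 0 := by
    conv_lhs => rw [← h2]
    rw [mul_assoc, P01, mul_zero]
  refine ⟨?_, ?_, ?_, ?_⟩
  · rw [← mul_assoc, ← mul_assoc, hB', mul_assoc B, h1]
  · rw [mul_assoc, ← hB, ← mul_assoc, mul_assoc B σ, h2]
  · rw [← mul_assoc, ← mul_assoc, hB, mul_assoc B, h1z, mul_zero, zero_mul]
  · rw [mul_assoc, ← hB', ← mul_assoc, mul_assoc B σ, h2z, mul_zero, zero_mul]

lemma P0IXXX : Proj 0 * (IX * XX) = (IX * XX) * Proj 1 := by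
  rw [← mul_assoc, P0IX, mul_assoc, P1XX, ← mul_assoc]
lemma P1IXXX : Proj 1 * (IX * XX) = (IX * XX) * Proj 0 := by
  rw [← mul_assoc, P1IX, mul_assoc, P0XX, ← mul_assoc]

lemma LamI_supp (p : ℝ) {σ : Matrix (Fin 2 × Fin 2) (Fin 2 × Fin 2) ℂ}
    (h1 : Proj 0 * σ = σ) (h2 : σ * Proj 0 = σ) :
    (Proj 0 * LamI p σ = LamI p σ) ∧ (LamI p σ * Proj 0 = LamI p σ) := by
  obtain ⟨hx1, hx2⟩ := conjP0 P0XX h1 h2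
  constructor <;>
    simp only [LamI, mul_add, add_mul, Matrix.mul_smul, Matrix.smul_mul, h1, h2, hx1, hx2]

lemma LamIX_supp (p : ℝ) {σ : Matrix (Fin 2 × Fin 2) (Fin 2 × Fin 2) ℂ}
    (h1 : Proj 0 * σ = σ) (h2 : σ * Proj 0 = σ) :
    (Proj 1 * LamIX p σ = LamIX p σ) ∧ (LamIX p σ * Proj 1 = LamIX p σ) ∧
      (Proj 0 * LamIX p σ = 0) ∧ (LamIX p σ * Proj 0 = 0) := by
  obtain ⟨ha1, ha2, ha3, ha4⟩ := conjP1 P0IX P1IX h1 h2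
  obtain ⟨hb1, hb2, hb3, hb4⟩ := conjP1 P0IXXX P1IXXX h1 h2
  have hc : XX * IX = IX * XX := IXXX.symm
  refine ⟨?_, ?_, ?_, ?_⟩ <;>
    simp only [LamIX, hc, mul_add, add_mul, Matrix.mul_smul, Matrix.smul_mul,
      ha1, ha2, ha3, ha4, hb1, hb2, hb3, hb4, add_zero, smul_zero]

lemma LamI_smul (p r : ℝ) (σ : Matrix (Fin 2 × Fin 2) (Fin 2 × Fin 2) ℂ) :
    LamI p (r • σ) = r • LamI p σ := by
  simp only [LamI, Matrix.mul_smul, Matrix.smul_mul, smul_add, smul_comm _ r]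

lemma LamIX_smul (p r : ℝ) (σ : Matrix (Fin 2 × Fin 2) (Fin 2 × Fin 2) ℂ) :
    LamIX p (r • σ) = r • LamIX p σ := by
  simp only [LamIX, Matrix.mul_smul, Matrix.smul_mul, smul_add, smul_comm _ r]

lemma LamI_LamIX_comm (p : ℝ) (ρ : Matrix (Fin 2 × Fin 2) (Fin 2 × Fin 2) ℂ) :
    LamI p (LamIX p ρ) = LamIX p (LamI p ρ) := by
  have r1 : ∀ t : Matrix (Fin 2 × Fin 2) (Fin 2 × Fin 2) ℂ, XX * (XX * t) = t := fun t => by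
    rw [← mul_assoc, XXXX, one_mul]
  have r2 : ∀ t : Matrix (Fin 2 × Fin 2) (Fin 2 × Fin 2) ℂ,
      XX * (IX * t) = IX * (XX * t) := fun t => by
    rw [← mul_assoc, ← IXXX, mul_assoc]
  have r3 : XX * IX = IX * XX := IXXX.symm
  simp only [LamI, LamIX, mul_add, add_mul, smul_add, Matrix.mul_smul, Matrix.smul_mul,
    mul_assoc, r1, r2, r3, XXXX, mul_one]
  module

lemma LamI_zero (p : ℝ) : LamI p 0 = 0 := by simp [LamI]
lemma LamIX_zero (p : ℝ) : LamIX p 0 = 0 := by simp [LamIX]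

/-- Phenomenological model, syndrome pair `(0,0)`: on a codespace-supported
state, `I₀(I₀(ρ)) = (1−q)²Λ_I² + qΛ_{IX}Λ_I + (1−q)qΛ_{IX}²` applied to `ρ`. -/
theorem phenomenological_syndrome_pair_00 (p q : ℝ)
    (ρ : Matrix (Fin 2 × Fin 2) (Fin 2 × Fin 2) ℂ)
    (hρ : Proj 0 * ρ * Proj 0 = ρ) :
    Inst p q 0 (Inst p q 0 ρ)
      = ((1 - q) ^ 2) • LamI p (LamI p ρ) + q • LamIX p (LamI p ρ)
          + ((1 - q) * q) • LamIX p (LamIX p ρ) := by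
  have h1 : Proj 0 * ρ = ρ := by
    conv_lhs => rw [← hρ]
    rw [← mul_assoc, ← mul_assoc, P00, hρ]
  have h2 : ρ * Proj 0 = ρ := by
    conv_lhs => rw [← hρ]
    rw [mul_assoc, P00, hρ]
  have h1z : Proj 1 * ρ = 0 := by rw [← h1, ← mul_assoc, P10, zero_mul]
  have hone : (0 + 1 : ZMod 2) = 1 := by decide
  obtain ⟨hI1, hI2⟩ := LamI_supp p h1 h2
  obtain ⟨hX1, hX2, hX3, hX4⟩ := LamIX_supp p h1 h2
  have step1 : Inst p q 0 ρ = (1 - q) • LamI p ρ + q • LamIX p ρ := by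
    rw [Inst, hone, hρ, h1z, zero_mul, P1, LamI_zero, LamIX_zero, smul_zero, smul_zero,
      add_zero, add_zero, P0]
  rw [step1]
  set σ0 := LamI p ρ with hσ0
  set σ1 := LamIX p ρ with hσ1
  have hτ0 : Proj 0 * ((1 - q) • σ0 + q • σ1) * Proj 0 = (1 - q) • σ0 := by
    simp only [mul_add, add_mul, Matrix.mul_smul, Matrix.smul_mul, hI1, hI2, hX3,
      zero_mul, smul_zero, add_zero]
  have hτ1 : Proj 1 * ((1 - q) • σ0 + q • σ1) * Proj 1 = q • σ1 := by
    have hI1z : Proj 1 * σ0 = 0 := by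
      rw [← hI1, ← mul_assoc, P10, zero_mul]
    simp only [mul_add, add_mul, Matrix.mul_smul, Matrix.smul_mul, hI1z, hX1, hX2,
      zero_mul, smul_zero, zero_add]
  rw [Inst, hone, hτ0, hτ1, P0, P1, LamI_smul, LamI_smul, LamIX_smul, LamIX_smul,
    show LamI p σ1 = LamIX p σ0 from LamI_LamIX_comm p ρ]
  module
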